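/- For the rational function R(z) = (1 + 2z/5 + z²/20)/(1 − 3z/5 + 3z²/20 − z³/60), one has |R(z)| ≤ 1 for all z ∈ ℂ with Re(z) ≤ 0 (the denominator never vanishes there). -/

import Mathlib

theorem stmt_5 (z : ℂ) (hz : z.re ≤ 0) :
    (1 - 3*z/5 + 3*z^2/20 - z^3/60) ≠ 0 ∧
    ‖(1 + 2*z/5 + z^2/20) / (1 - 3*z/5 + 3*z^2/20 - z^3/60)‖ ≤ 1 := by
  obtain ⟨a, ha, hre⟩ : ∃ a : ℝ, 0 ≤ a ∧ z.re = -a := ⟨-z.re, by linarith, by ring⟩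
  set y := z.im with hy
  have hnQ : Complex.normSq (60 - 36*z + 9*z^2 - z^3) =
      3600 + 216*y^2 + 9*y^4 + y^6 + 4320*a + 288*a*y^2
      + 18*a*y^4 + 2376*a^2 + 162*a^2*y^2 + 3*a^2*y^4
      + 768*a^3 + 36*a^3*y^2 + 153*a^4 + 3*a^4*y^2
      + 18*a^5 + a^6 := by
    simp [Complex.normSq_apply, Complex.sub_re, Complex.sub_im, Complex.add_re,
      Complex.add_im, Complex.mul_re, Complex.mul_im, pow_succ]
    rw [hre]
    ring
  have hnP : Complex.normSq (60 + 24*z + 3*z^2) =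
      3600 + 216*y^2 + 9*y^4 - 2880*a - 144*a*y^2 + 936*a^2
      + 18*a^2*y^2 - 144*a^3 + 9*a^4 := by
    simp [Complex.normSq_apply, Complex.sub_re, Complex.sub_im, Complex.add_re,
      Complex.add_im, Complex.mul_re, Complex.mul_im, pow_succ]
    rw [hre]
    ring
  have hQpos : 0 < Complex.normSq (60 - 36*z + 9*z^2 - z^3) := by
    rw [hnQ]; positivity
  have hle : Complex.normSq (60 + 24*z + 3*z^2) ≤
      Complex.normSq (60 - 36*z + 9*z^2 - z^3) := by
    rw [hnQ, hnP]
    nlinarith [mul_nonneg ha (sq_nonneg (y^2)), mul_nonneg ha (sq_nonneg y),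
      mul_nonneg (mul_nonneg ha ha) (sq_nonneg (y^2)),
      mul_nonneg (mul_nonneg ha ha) (sq_nonneg y),
      mul_nonneg (mul_nonneg (mul_nonneg ha ha) ha) (sq_nonneg y),
      mul_nonneg (mul_nonneg (mul_nonneg (mul_nonneg ha ha) ha) ha) (sq_nonneg y),
      mul_nonneg (mul_nonneg ha ha) (mul_nonneg (mul_nonneg ha ha) (mul_nonneg ha ha)),
      mul_nonneg (mul_nonneg ha ha) (mul_nonneg (mul_nonneg ha ha) ha),
      mul_nonneg (mul_nonneg ha ha) (mul_nonneg ha ha),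
      mul_nonneg (mul_nonneg ha ha) ha, mul_nonneg ha ha, sq_nonneg (y^3)]
  have hQ' : (60 - 36*z + 9*z^2 - z^3) ≠ 0 := by
    intro h
    rw [h, map_zero] at hQpos
    exact lt_irrefl 0 hQpos
  have hden : (1 - 3*z/5 + 3*z^2/20 - z^3/60) = (60 - 36*z + 9*z^2 - z^3)/60 := by
    ring
  have hdne : (1 - 3*z/5 + 3*z^2/20 - z^3/60) ≠ 0 := by
    rw [hden]
    exact div_ne_zero hQ' (by norm_num)
  refine ⟨hdne, ?_⟩
  have hnum : (1 + 2*z/5 + z^2/20) = (60 + 24*z + 3*z^2)/60 := by ring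
  have hcancel : (60 + 24*z + 3*z^2)/60 / ((60 - 36*z + 9*z^2 - z^3)/60)
      = (60 + 24*z + 3*z^2) / (60 - 36*z + 9*z^2 - z^3) := by
    field_simp
  rw [hnum, hden, hcancel]
  rw [norm_div, div_le_one (norm_pos_iff.mpr hQ')]
  have h1 := Complex.sq_norm (60 + 24*z + 3*z^2)
  have h2 := Complex.sq_norm (60 - 36*z + 9*z^2 - z^3)
  nlinarith [norm_nonneg (60 + 24*z + 3*z^2),
    norm_nonneg (60 - 36*z + 9*z^2 - z^3)]
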